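/- arXiv:2201.13308 — 6 statements merged into one kernel-verified Lean document; each statement's English description precedes it below -/
import Mathlib

section
/- Suppose the strict dominance condition |c(xβ, yβ, m)| > Σ_{(α₁,α₂) ≤ (bx,by), (α₁,α₂) ≠ (xβ,yβ)} |c(α₁, α₂, m)| holds. Then for every right-hand side g : ℕ³ → ℂ and every initial data function φ : ℕ³ → ℂ there exists a function f : ℕ³ → ℂ such that (i) Σ_{i ≤ bx, j ≤ by, k ≤ m} c(i,j,k) · f(x+i, y+j, z+k) = g(x,y,z) for all (x,y,z) ∈ E, and (ii) f(x,y,z) = φ(x,y,z) for all (x,y,z) ∈ L; moreover any two functions f₁, f₂ satisfying (i) and (ii) agree at every point of Π. (Unique solvability of the Cauchy problem for a three-dimensional difference equation in a parallelepiped.) -/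
open Finset

namespace CP3D

def slab (Bx BY bx bY xβ yβ : ℕ) : Finset (ℕ × ℕ) :=
  Finset.Icc xβ (Bx - bx + xβ) ×ˢ Finset.Icc yβ (BY - bY + yβ)

lemma mem_slab {Bx BY bx bY xβ yβ x y : ℕ} :
    (x, y) ∈ slab Bx BY bx bY xβ yβ ↔
      (xβ ≤ x ∧ x ≤ Bx - bx + xβ) ∧ (yβ ≤ y ∧ y ≤ BY - bY + yβ) := by
  simp [slab, Finset.mem_product]

def mat (Bx BY bx bY m xβ yβ : ℕ) (c : ℕ → ℕ → ℕ → ℂ) :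
    Matrix (slab Bx BY bx bY xβ yβ) (slab Bx BY bx bY xβ yβ) ℂ :=
  fun p q =>
    if p.1.1 ≤ q.1.1 + xβ ∧ q.1.1 + xβ ≤ p.1.1 + bx ∧
       p.1.2 ≤ q.1.2 + yβ ∧ q.1.2 + yβ ≤ p.1.2 + bY then
      c (q.1.1 + xβ - p.1.1) (q.1.2 + yβ - p.1.2) m
    else 0

lemma mulVec_eq (Bx BY bx bY m xβ yβ : ℕ) (c : ℕ → ℕ → ℕ → ℂ)
    (x' y' : ℕ) (hp : (x' + xβ, y' + yβ) ∈ slab Bx BY bx bY xβ yβ)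
    (v : slab Bx BY bx bY xβ yβ → ℂ) :
    (mat Bx BY bx bY m xβ yβ c).mulVec v ⟨(x' + xβ, y' + yβ), hp⟩ =
      ∑ i ∈ range (bx + 1), ∑ j ∈ range (bY + 1),
        if h : (x' + i, y' + j) ∈ slab Bx BY bx bY xβ yβ then
          c i j m * v ⟨(x' + i, y' + j), h⟩
        else 0 := by
  classical
  rw [← Finset.sum_product']
  have lhs : (mat Bx BY bx bY m xβ yβ c).mulVec v ⟨(x' + xβ, y' + yβ), hp⟩ =
      ∑ q ∈ (univ : Finset (slab Bx BY bx bY xβ yβ)).filter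
          (fun q => x' ≤ q.1.1 ∧ q.1.1 ≤ x' + bx ∧ y' ≤ q.1.2 ∧ q.1.2 ≤ y' + bY),
        c (q.1.1 - x') (q.1.2 - y') m * v q := by
    rw [Matrix.mulVec, Finset.sum_filter]
    apply Finset.sum_congr rfl
    intro q _
    simp only [mat, dotProduct]
    by_cases h : x' ≤ q.1.1 ∧ q.1.1 ≤ x' + bx ∧ y' ≤ q.1.2 ∧ q.1.2 ≤ y' + bY
    · rw [if_pos h, if_pos (by omega)]
      congr 2 <;> omega
    · rw [if_neg h, if_neg (by omega), zero_mul]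
  rw [lhs]
  have rhs : ∑ t ∈ range (bx + 1) ×ˢ range (bY + 1),
      (if h : (x' + t.1, y' + t.2) ∈ slab Bx BY bx bY xβ yβ then
          c t.1 t.2 m * v ⟨(x' + t.1, y' + t.2), h⟩ else 0) =
      ∑ t ∈ (range (bx + 1) ×ˢ range (bY + 1)).filter
          (fun t => (x' + t.1, y' + t.2) ∈ slab Bx BY bx bY xβ yβ),
        (if h : (x' + t.1, y' + t.2) ∈ slab Bx BY bx bY xβ yβ then
          c t.1 t.2 m * v ⟨(x' + t.1, y' + t.2), h⟩ else 0) := by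
    rw [Finset.sum_filter_of_ne]
    intro t _ h
    by_contra hmem
    exact h (by rw [dif_neg hmem])
  rw [rhs]
  refine Finset.sum_bij' (fun q _ => ((q : ℕ × ℕ).1 - x', (q : ℕ × ℕ).2 - y'))
    (fun t ht => (⟨(x' + t.1, y' + t.2), by
      simp only [mem_filter] at ht; exact ht.2⟩ : {p // p ∈ slab Bx BY bx bY xβ yβ}))
    ?_ ?_ ?_ ?_ ?_
  · intro q hq
    simp only [mem_filter, mem_univ, true_and] at hq
    simp only [mem_filter, mem_product, mem_range]
    constructor
    · constructor <;> omega
    · have : (x' + ((q : ℕ × ℕ).1 - x'), y' + ((q : ℕ × ℕ).2 - y')) = (q : ℕ × ℕ) := by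
        ext <;> simp <;> omega
      rw [this]; exact q.2
  · intro t ht
    simp only [mem_filter, mem_product, mem_range] at ht
    simp only [mem_filter, mem_univ, true_and]
    refine ⟨by omega, by omega, by omega, by omega⟩
  · intro q hq
    simp only [mem_filter, mem_univ, true_and] at hq
    apply Subtype.ext
    ext <;> simp <;> omega
  · intro t ht
    simp only [mem_filter, mem_product, mem_range] at ht
    ext <;> simp
  · intro q hq
    simp only [mem_filter, mem_univ, true_and] at hq
    have hmem : (x' + ((q : ℕ × ℕ).1 - x'), y' + ((q : ℕ × ℕ).2 - y')) ∈
        slab Bx BY bx bY xβ yβ := by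
      have : (x' + ((q : ℕ × ℕ).1 - x'), y' + ((q : ℕ × ℕ).2 - y')) = (q : ℕ × ℕ) := by
        ext <;> simp <;> omega
      rw [this]; exact q.2
    rw [dif_pos hmem]
    have he : (⟨(x' + ((q : ℕ × ℕ).1 - x'), y' + ((q : ℕ × ℕ).2 - y')), hmem⟩ :
        slab Bx BY bx bY xβ yβ) = q := by
      apply Subtype.ext; ext <;> simp <;> omega
    rw [he]

lemma mat_diag (Bx BY bx bY m xβ yβ : ℕ) (c : ℕ → ℕ → ℕ → ℂ)
    (hxβ : xβ ≤ bx) (hyβ : yβ ≤ bY) (p : slab Bx BY bx bY xβ yβ) :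
    mat Bx BY bx bY m xβ yβ c p p = c xβ yβ m := by
  simp only [mat]
  rw [if_pos (by omega)]
  congr 1 <;> omega

lemma row_bound (Bx BY bx bY m xβ yβ : ℕ) (c : ℕ → ℕ → ℕ → ℂ)
    (p : slab Bx BY bx bY xβ yβ) :
    ∑ q ∈ (univ : Finset (slab Bx BY bx bY xβ yβ)).erase p,
        ‖mat Bx BY bx bY m xβ yβ c p q‖ ≤
      ∑ t ∈ ((range (bx + 1)) ×ˢ (range (bY + 1))).erase (xβ, yβ),
        ‖c t.1 t.2 m‖ := by
  classical
  set G := fun q : slab Bx BY bx bY xβ yβ =>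
    p.1.1 ≤ q.1.1 + xβ ∧ q.1.1 + xβ ≤ p.1.1 + bx ∧
       p.1.2 ≤ q.1.2 + yβ ∧ q.1.2 + yβ ≤ p.1.2 + bY with hG
  have h1 : ∑ q ∈ (univ : Finset (slab Bx BY bx bY xβ yβ)).erase p,
      ‖mat Bx BY bx bY m xβ yβ c p q‖ =
      ∑ q ∈ ((univ : Finset (slab Bx BY bx bY xβ yβ)).erase p).filter G,
        ‖c (q.1.1 + xβ - p.1.1) (q.1.2 + yβ - p.1.2) m‖ := by
    rw [Finset.sum_filter]
    apply Finset.sum_congr rfl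
    intro q _
    simp only [mat, hG]
    split_ifs with h
    · rfl
    · simp
  rw [h1]
  have h2 : ∑ q ∈ ((univ : Finset (slab Bx BY bx bY xβ yβ)).erase p).filter G,
      ‖c (q.1.1 + xβ - p.1.1) (q.1.2 + yβ - p.1.2) m‖ =
      ∑ t ∈ (((univ : Finset (slab Bx BY bx bY xβ yβ)).erase p).filter G).image
          (fun q => (q.1.1 + xβ - p.1.1, q.1.2 + yβ - p.1.2)),
        ‖c t.1 t.2 m‖ := by
    rw [Finset.sum_image]
    intro a ha b hb hab
    simp only [Finset.mem_coe, mem_filter, Finset.mem_erase, hG] at ha hb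
    have h1 := ha.2; have h2 := hb.2
    apply Subtype.ext
    rw [Prod.mk.injEq] at hab
    ext
    · omega
    · omega
  rw [h2]
  apply Finset.sum_le_sum_of_subset_of_nonneg
  · intro t ht
    simp only [Finset.mem_image, mem_filter, Finset.mem_erase, hG] at ht
    obtain ⟨q, ⟨⟨hqp, -⟩, hg⟩, rfl⟩ := ht
    simp only [Finset.mem_erase, mem_product, mem_range]
    constructor
    · intro heq
      rw [Prod.mk.injEq] at heq
      exact hqp (Subtype.ext (by ext <;> omega))
    · constructor <;> omega
  · intro t _ _
    positivity

lemma det_ne_zero (Bx BY bx bY m xβ yβ : ℕ) (c : ℕ → ℕ → ℕ → ℂ)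
    (hxβ : xβ ≤ bx) (hyβ : yβ ≤ bY)
    (hdom : ∑ t ∈ ((range (bx + 1)) ×ˢ (range (bY + 1))).erase (xβ, yβ),
        ‖c t.1 t.2 m‖ < ‖c xβ yβ m‖) :
    (mat Bx BY bx bY m xβ yβ c).det ≠ 0 := by
  classical
  intro hdet
  obtain ⟨v, hv, hmv⟩ := (Matrix.exists_mulVec_eq_zero_iff).2 hdet
  obtain ⟨p0, hp0⟩ : ∃ p, v p ≠ 0 := by
    by_contra h
    push_neg at h
    exact hv (funext h)
  obtain ⟨p, -, hp⟩ := Finset.exists_max_image (univ : Finset (slab Bx BY bx bY xβ yβ))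
    (fun q => ‖v q‖) ⟨p0, mem_univ _⟩
  have hvp : 0 < ‖v p‖ :=
    lt_of_lt_of_le (by simpa using hp0) (hp p0 (mem_univ _))
  have h0 : (mat Bx BY bx bY m xβ yβ c).mulVec v p = 0 := by rw [hmv]; rfl
  rw [Matrix.mulVec, dotProduct, ← Finset.add_sum_erase _ _ (mem_univ p)] at h0
  have heq : mat Bx BY bx bY m xβ yβ c p p * v p =
      -∑ q ∈ (univ : Finset (slab Bx BY bx bY xβ yβ)).erase p,
        mat Bx BY bx bY m xβ yβ c p q * v q := by linear_combination h0
  have hle : ‖c xβ yβ m‖ * ‖v p‖ ≤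
      (∑ t ∈ ((range (bx + 1)) ×ˢ (range (bY + 1))).erase (xβ, yβ),
        ‖c t.1 t.2 m‖) * ‖v p‖ := by
    calc ‖c xβ yβ m‖ * ‖v p‖
        = ‖mat Bx BY bx bY m xβ yβ c p p * v p‖ := by
          rw [norm_mul, mat_diag _ _ _ _ _ _ _ _ hxβ hyβ]
      _ = ‖∑ q ∈ (univ : Finset (slab Bx BY bx bY xβ yβ)).erase p,
            mat Bx BY bx bY m xβ yβ c p q * v q‖ := by rw [heq, norm_neg]
      _ ≤ ∑ q ∈ (univ : Finset (slab Bx BY bx bY xβ yβ)).erase p,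
            ‖mat Bx BY bx bY m xβ yβ c p q * v q‖ := by
          exact norm_sum_le _ _
      _ ≤ ∑ q ∈ (univ : Finset (slab Bx BY bx bY xβ yβ)).erase p,
            ‖mat Bx BY bx bY m xβ yβ c p q‖ * ‖v p‖ := by
          apply Finset.sum_le_sum
          intro q _
          rw [norm_mul]
          exact mul_le_mul_of_nonneg_left (hp q (mem_univ _)) (by positivity)
      _ = (∑ q ∈ (univ : Finset (slab Bx BY bx bY xβ yβ)).erase p,
            ‖mat Bx BY bx bY m xβ yβ c p q‖) * ‖v p‖ := by
          rw [Finset.sum_mul]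
      _ ≤ _ := by
          exact mul_le_mul_of_nonneg_right (row_bound _ _ _ _ _ _ _ _ p) (le_of_lt hvp)
  have := mul_lt_mul_of_pos_right hdom hvp
  exact absurd hle (not_le.2 this)

lemma mulVec_injective (Bx BY bx bY m xβ yβ : ℕ) (c : ℕ → ℕ → ℕ → ℂ)
    (hxβ : xβ ≤ bx) (hyβ : yβ ≤ bY)
    (hdom : ∑ t ∈ ((range (bx + 1)) ×ˢ (range (bY + 1))).erase (xβ, yβ),
        ‖c t.1 t.2 m‖ < ‖c xβ yβ m‖)
    (u : slab Bx BY bx bY xβ yβ → ℂ)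
    (hu : (mat Bx BY bx bY m xβ yβ c).mulVec u = 0) : u = 0 := by
  classical
  have hdet := det_ne_zero Bx BY bx bY m xβ yβ c hxβ hyβ hdom
  have : (mat Bx BY bx bY m xβ yβ c)⁻¹.mulVec ((mat Bx BY bx bY m xβ yβ c).mulVec u) = u := by
    rw [Matrix.mulVec_mulVec, Matrix.nonsing_inv_mul _ (isUnit_iff_ne_zero.2 hdet),
      Matrix.one_mulVec]
  rw [hu, Matrix.mulVec_zero] at this
  exact this.symm

lemma mulVec_inv (Bx BY bx bY m xβ yβ : ℕ) (c : ℕ → ℕ → ℕ → ℂ)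
    (hxβ : xβ ≤ bx) (hyβ : yβ ≤ bY)
    (hdom : ∑ t ∈ ((range (bx + 1)) ×ˢ (range (bY + 1))).erase (xβ, yβ),
        ‖c t.1 t.2 m‖ < ‖c xβ yβ m‖)
    (b : slab Bx BY bx bY xβ yβ → ℂ) :
    (mat Bx BY bx bY m xβ yβ c).mulVec ((mat Bx BY bx bY m xβ yβ c)⁻¹.mulVec b) = b := by
  classical
  have hdet := det_ne_zero Bx BY bx bY m xβ yβ c hxβ hyβ hdom
  rw [Matrix.mulVec_mulVec, Matrix.mul_nonsing_inv _ (isUnit_iff_ne_zero.2 hdet),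
    Matrix.one_mulVec]

noncomputable def F (Bx BY bx bY m xβ yβ : ℕ) (c : ℕ → ℕ → ℕ → ℂ)
    (g φ : ℕ → ℕ → ℕ → ℂ) (x y z : ℕ) : ℂ :=
  if hx : (x, y) ∈ slab Bx BY bx bY xβ yβ ∧ m ≤ z then
    (mat Bx BY bx bY m xβ yβ c)⁻¹.mulVec
      (fun p => g (p.1.1 - xβ) (p.1.2 - yβ) (z - m)
        - ∑ i ∈ range (bx + 1), ∑ j ∈ range (bY + 1),
            ((∑ k ∈ range m,
                if _hk : k < m then
                  c i j k * F Bx BY bx bY m xβ yβ c g φ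
                    (p.1.1 - xβ + i) (p.1.2 - yβ + j) (z - m + k)
                else 0)
              + if (p.1.1 - xβ + i, p.1.2 - yβ + j) ∈ slab Bx BY bx bY xβ yβ then 0
                else c i j m * φ (p.1.1 - xβ + i) (p.1.2 - yβ + j) z))
      ⟨(x, y), hx.1⟩
  else φ x y z
termination_by z
decreasing_by omega

lemma F_initial (Bx BY bx bY m xβ yβ : ℕ) (c : ℕ → ℕ → ℕ → ℂ)
    (g φ : ℕ → ℕ → ℕ → ℂ) (x y z : ℕ)
    (h : ¬((x, y) ∈ slab Bx BY bx bY xβ yβ ∧ m ≤ z)) :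
    F Bx BY bx bY m xβ yβ c g φ x y z = φ x y z := by
  rw [F, dif_neg h]

lemma F_solves (Bx BY bx bY m xβ yβ : ℕ) (c : ℕ → ℕ → ℕ → ℂ)
    (hxβ : xβ ≤ bx) (hyβ : yβ ≤ bY)
    (hdom : ∑ t ∈ ((range (bx + 1)) ×ˢ (range (bY + 1))).erase (xβ, yβ),
        ‖c t.1 t.2 m‖ < ‖c xβ yβ m‖)
    (g φ : ℕ → ℕ → ℕ → ℂ)
    (x' y' z' : ℕ) (hx' : x' ≤ Bx - bx) (hy' : y' ≤ BY - bY) :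
    ∑ i ∈ range (bx + 1), ∑ j ∈ range (bY + 1), ∑ k ∈ range (m + 1),
      c i j k * F Bx BY bx bY m xβ yβ c g φ (x' + i) (y' + j) (z' + k) = g x' y' z' := by
  classical
  have hp : (x' + xβ, y' + yβ) ∈ slab Bx BY bx bY xβ yβ := by
    rw [mem_slab]; omega
  obtain ⟨u, hkey, hAu⟩ :
      ∃ u : {p // p ∈ slab Bx BY bx bY xβ yβ} → ℂ,
        (∀ a b (h : (a, b) ∈ slab Bx BY bx bY xβ yβ),
          F Bx BY bx bY m xβ yβ c g φ a b (z' + m) = u ⟨(a, b), h⟩) ∧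
        (mat Bx BY bx bY m xβ yβ c).mulVec u ⟨(x' + xβ, y' + yβ), hp⟩ =
          g x' y' z' - ∑ i ∈ range (bx + 1), ∑ j ∈ range (bY + 1),
            ((∑ k ∈ range m,
                c i j k * F Bx BY bx bY m xβ yβ c g φ (x' + i) (y' + j) (z' + k))
              + if (x' + i, y' + j) ∈ slab Bx BY bx bY xβ yβ then 0
                else c i j m * φ (x' + i) (y' + j) (z' + m)) := by
    refine ⟨(mat Bx BY bx bY m xβ yβ c)⁻¹.mulVec
      (fun p => g (p.1.1 - xβ) (p.1.2 - yβ) (z' + m - m)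
        - ∑ i ∈ range (bx + 1), ∑ j ∈ range (bY + 1),
            ((∑ k ∈ range m,
                if _hk : k < m then
                  c i j k * F Bx BY bx bY m xβ yβ c g φ
                    (p.1.1 - xβ + i) (p.1.2 - yβ + j) (z' + m - m + k)
                else 0)
              + if (p.1.1 - xβ + i, p.1.2 - yβ + j) ∈ slab Bx BY bx bY xβ yβ then 0
                else c i j m * φ (p.1.1 - xβ + i) (p.1.2 - yβ + j) (z' + m))), ?_, ?_⟩
    · intro a b h
      rw [F, dif_pos (show (a, b) ∈ slab Bx BY bx bY xβ yβ ∧ m ≤ z' + m from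
        ⟨h, by omega⟩)]
    · rw [mulVec_inv Bx BY bx bY m xβ yβ c hxβ hyβ hdom]
      simp only [Nat.add_sub_cancel]
      congr 1
      apply Finset.sum_congr rfl
      intro i _
      apply Finset.sum_congr rfl
      intro j _
      congr 1
      apply Finset.sum_congr rfl
      intro k hk
      rw [dif_pos (mem_range.1 hk)]
  have step : ∀ i j,
      ∑ k ∈ range (m + 1), c i j k * F Bx BY bx bY m xβ yβ c g φ (x' + i) (y' + j) (z' + k) =
      (∑ k ∈ range m, c i j k * F Bx BY bx bY m xβ yβ c g φ (x' + i) (y' + j) (z' + k))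
      + ((if h : (x' + i, y' + j) ∈ slab Bx BY bx bY xβ yβ then
            c i j m * u ⟨(x' + i, y' + j), h⟩ else 0)
        + (if (x' + i, y' + j) ∈ slab Bx BY bx bY xβ yβ then 0
            else c i j m * φ (x' + i) (y' + j) (z' + m))) := by
    intro i j
    rw [Finset.sum_range_succ]
    congr 1
    by_cases h : (x' + i, y' + j) ∈ slab Bx BY bx bY xβ yβ
    · rw [dif_pos h, if_pos h, add_zero, hkey _ _ h]
    · rw [dif_neg h, if_neg h, zero_add,
        F_initial Bx BY bx bY m xβ yβ c g φ _ _ _ (fun hco => h hco.1)]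
  simp only [step]
  simp only [Finset.sum_add_distrib]
  rw [← mulVec_eq Bx BY bx bY m xβ yβ c x' y' hp u, hAu]
  simp only [Finset.sum_add_distrib]
  ring

end CP3D

/-- Unique solvability of the Cauchy problem for a three-dimensional difference
equation in a parallelepiped: under the strict dominance condition on the top-layer
coefficients, for every right-hand side `g` and initial data `φ` there is a solution
`f` of the difference equation on the equation domain `E` agreeing with `φ` on the
initial-data set `L = Π \ Π_β`, and any two such solutions agree on `Π`. -/
theorem cauchy_problem_unique_solvability
    (Bx BY bx bY m : ℕ) (hbx : bx < Bx) (hbY : bY < BY) (hm : 1 ≤ m)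
    (c : ℕ → ℕ → ℕ → ℂ)
    (xβ yβ : ℕ) (hxβ : xβ ≤ bx) (hyβ : yβ ≤ bY)
    (hc : c xβ yβ m ≠ 0)
    (hdom : ∑ p ∈ ((Finset.range (bx + 1)) ×ˢ (Finset.range (bY + 1))).erase (xβ, yβ),
        ‖c p.1 p.2 m‖ < ‖c xβ yβ m‖) :
    ∀ g φ : ℕ → ℕ → ℕ → ℂ,
      (∃ f : ℕ → ℕ → ℕ → ℂ,
        (∀ x y z : ℕ, x ≤ Bx - bx → y ≤ BY - bY →
          ∑ i ∈ Finset.range (bx + 1), ∑ j ∈ Finset.range (bY + 1),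
            ∑ k ∈ Finset.range (m + 1),
              c i j k * f (x + i) (y + j) (z + k) = g x y z) ∧
        (∀ x y z : ℕ, (x ≤ Bx ∧ y ≤ BY) ∧
            ¬(xβ ≤ x ∧ x ≤ Bx - bx + xβ ∧ yβ ≤ y ∧ y ≤ BY - bY + yβ ∧ m ≤ z) →
          f x y z = φ x y z)) ∧
      (∀ f₁ f₂ : ℕ → ℕ → ℕ → ℂ,
        ((∀ x y z : ℕ, x ≤ Bx - bx → y ≤ BY - bY →
          ∑ i ∈ Finset.range (bx + 1), ∑ j ∈ Finset.range (bY + 1),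
            ∑ k ∈ Finset.range (m + 1),
              c i j k * f₁ (x + i) (y + j) (z + k) = g x y z) ∧
         (∀ x y z : ℕ, (x ≤ Bx ∧ y ≤ BY) ∧
            ¬(xβ ≤ x ∧ x ≤ Bx - bx + xβ ∧ yβ ≤ y ∧ y ≤ BY - bY + yβ ∧ m ≤ z) →
           f₁ x y z = φ x y z)) →
        ((∀ x y z : ℕ, x ≤ Bx - bx → y ≤ BY - bY →
          ∑ i ∈ Finset.range (bx + 1), ∑ j ∈ Finset.range (bY + 1),
            ∑ k ∈ Finset.range (m + 1),
              c i j k * f₂ (x + i) (y + j) (z + k) = g x y z) ∧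
         (∀ x y z : ℕ, (x ≤ Bx ∧ y ≤ BY) ∧
            ¬(xβ ≤ x ∧ x ≤ Bx - bx + xβ ∧ yβ ≤ y ∧ y ≤ BY - bY + yβ ∧ m ≤ z) →
           f₂ x y z = φ x y z)) →
        ∀ x y z : ℕ, x ≤ Bx → y ≤ BY → f₁ x y z = f₂ x y z) := by
  intro g φ
  constructor
  · -- Existence
    refine ⟨CP3D.F Bx BY bx bY m xβ yβ c g φ, ?_, ?_⟩
    · intro x y z hx hy
      exact CP3D.F_solves Bx BY bx bY m xβ yβ c hxβ hyβ hdom g φ x y z hx hy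
    · rintro x y z ⟨-, hL⟩
      apply CP3D.F_initial
      rw [CP3D.mem_slab]
      tauto
  · -- Uniqueness
    intro f₁ f₂ h₁ h₂
    have main : ∀ z x y, x ≤ Bx → y ≤ BY → f₁ x y z = f₂ x y z := by
      intro z
      induction z using Nat.strong_induction_on with
      | _ z ih =>
      -- first handle slab points via the matrix argument
      have slabcase : (m ≤ z) →
          ∀ q : {p // p ∈ CP3D.slab Bx BY bx bY xβ yβ},
            f₁ q.1.1 q.1.2 z = f₂ q.1.1 q.1.2 z := by
        intro hmz
        set u : {p // p ∈ CP3D.slab Bx BY bx bY xβ yβ} → ℂ :=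
          fun q => f₁ q.1.1 q.1.2 z - f₂ q.1.1 q.1.2 z with hu
        have aux : ∀ x' y' (hp : (x' + xβ, y' + yβ) ∈ CP3D.slab Bx BY bx bY xβ yβ),
            (CP3D.mat Bx BY bx bY m xβ yβ c).mulVec u ⟨(x' + xβ, y' + yβ), hp⟩ = 0 := by
          intro x' y' hp
          rw [CP3D.mulVec_eq]
          have hps := CP3D.mem_slab.1 hp
          have hx' : x' ≤ Bx - bx := by omega
          have hy' : y' ≤ BY - bY := by omega
          have e₁ := h₁.1 x' y' (z - m) hx' hy'
          have e₂ := h₂.1 x' y' (z - m) hx' hy'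
          have per : ∀ i ∈ Finset.range (bx + 1), ∀ j ∈ Finset.range (bY + 1),
              (if h : (x' + i, y' + j) ∈ CP3D.slab Bx BY bx bY xβ yβ then
                  c i j m * u ⟨(x' + i, y' + j), h⟩ else 0) =
              ∑ k ∈ Finset.range (m + 1),
                c i j k * (f₁ (x' + i) (y' + j) (z - m + k)
                  - f₂ (x' + i) (y' + j) (z - m + k)) := by
            intro i hi j hj
            rw [Finset.mem_range] at hi hj
            rw [Finset.sum_range_succ]
            have hz0 : ∀ k ∈ Finset.range m,
                c i j k * (f₁ (x' + i) (y' + j) (z - m + k)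
                  - f₂ (x' + i) (y' + j) (z - m + k)) = 0 := by
              intro k hk
              rw [Finset.mem_range] at hk
              rw [ih (z - m + k) (by omega) (x' + i) (y' + j) (by omega) (by omega),
                sub_self, mul_zero]
            rw [Finset.sum_eq_zero hz0, zero_add]
            have hzm : z - m + m = z := by omega
            rw [hzm]
            by_cases h : (x' + i, y' + j) ∈ CP3D.slab Bx BY bx bY xβ yβ
            · rw [dif_pos h]
            · rw [dif_neg h]
              rw [CP3D.mem_slab] at h
              have hcond : ((x' + i ≤ Bx ∧ y' + j ≤ BY) ∧
                  ¬(xβ ≤ x' + i ∧ x' + i ≤ Bx - bx + xβ ∧ yβ ≤ y' + j ∧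
                    y' + j ≤ BY - bY + yβ ∧ m ≤ z)) := by
                constructor
                · omega
                · intro hco; exact h ⟨⟨hco.1, hco.2.1⟩, hco.2.2.1, hco.2.2.2.1⟩
              rw [h₁.2 _ _ _ hcond, h₂.2 _ _ _ hcond, sub_self, mul_zero]
          rw [Finset.sum_congr rfl (fun i hi => Finset.sum_congr rfl (per i hi))]
          have : ∑ i ∈ Finset.range (bx + 1), ∑ j ∈ Finset.range (bY + 1),
              ∑ k ∈ Finset.range (m + 1),
                c i j k * (f₁ (x' + i) (y' + j) (z - m + k)
                  - f₂ (x' + i) (y' + j) (z - m + k)) =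
              (∑ i ∈ Finset.range (bx + 1), ∑ j ∈ Finset.range (bY + 1),
                ∑ k ∈ Finset.range (m + 1),
                  c i j k * f₁ (x' + i) (y' + j) (z - m + k))
              - (∑ i ∈ Finset.range (bx + 1), ∑ j ∈ Finset.range (bY + 1),
                ∑ k ∈ Finset.range (m + 1),
                  c i j k * f₂ (x' + i) (y' + j) (z - m + k)) := by
            simp [mul_sub, Finset.sum_sub_distrib]
          rw [this, e₁, e₂, sub_self]
        have hmv : (CP3D.mat Bx BY bx bY m xβ yβ c).mulVec u = 0 := by
          funext q
          obtain ⟨⟨px, py⟩, hq⟩ := q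
          have hqs := CP3D.mem_slab.1 hq
          have hq' : ((px - xβ) + xβ, (py - yβ) + yβ) ∈ CP3D.slab Bx BY bx bY xβ yβ := by
            rw [CP3D.mem_slab]; omega
          have he : (⟨(px, py), hq⟩ : {p // p ∈ CP3D.slab Bx BY bx bY xβ yβ}) =
              ⟨((px - xβ) + xβ, (py - yβ) + yβ), hq'⟩ := by
            apply Subtype.ext; ext <;> simp <;> omega
          rw [he]
          exact aux (px - xβ) (py - yβ) hq'
        have hu0 := CP3D.mulVec_injective Bx BY bx bY m xβ yβ c hxβ hyβ hdom u hmv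
        intro q
        have := congrFun hu0 q
        simp only [hu, Pi.zero_apply] at this
        exact sub_eq_zero.1 this
      intro x y hxB hyB
      by_cases hmem : (x, y) ∈ CP3D.slab Bx BY bx bY xβ yβ ∧ m ≤ z
      · exact slabcase hmem.2 ⟨(x, y), hmem.1⟩
      · rw [CP3D.mem_slab] at hmem
        have hcond : ((x ≤ Bx ∧ y ≤ BY) ∧
            ¬(xβ ≤ x ∧ x ≤ Bx - bx + xβ ∧ yβ ≤ y ∧ y ≤ BY - bY + yβ ∧ m ≤ z)) := by
          constructor
          · exact ⟨hxB, hyB⟩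
          · intro hco
            exact hmem ⟨⟨⟨hco.1, hco.2.1⟩, hco.2.2.1, hco.2.2.2.1⟩, hco.2.2.2.2⟩
        rw [h₁.2 _ _ _ hcond, h₂.2 _ _ _ hcond]
    intro x y z hx hy
    exact main z x y hx hy
end

section
/- Suppose the strict dominance condition |c(xβ, yβ, m)| > Σ_{(α₁,α₂) ≤ (bx,by), (α₁,α₂) ≠ (xβ,yβ)} |c(α₁, α₂, m)| holds. If a function f : ℕ³ → ℂ satisfies the homogeneous equation Σ_{i ≤ bx, j ≤ by, k ≤ m} c(i,j,k) · f(x+i, y+j, z+k) = 0 for all (x,y,z) ∈ E and f vanishes identically on L, then f vanishes identically on Π. (Uniqueness for the Cauchy problem for a three-dimensional difference equation in a parallelepiped.) -/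
/-- Uniqueness for the Cauchy problem for a three-dimensional difference equation in a
parallelepiped: under the strict dominance condition, a solution of the homogeneous
difference equation on the equation domain `E` that vanishes identically on the
initial-data set `L = Π \ Π_β` vanishes identically on `Π`. -/
theorem cauchy_problem_uniqueness
    (Bx BY bx bY m : ℕ) (hbx : bx < Bx) (hbY : bY < BY) (hm : 1 ≤ m)
    (c : ℕ → ℕ → ℕ → ℂ)
    (xβ yβ : ℕ) (hxβ : xβ ≤ bx) (hyβ : yβ ≤ bY)
    (hc : c xβ yβ m ≠ 0)
    (hdom : ∑ p ∈ ((Finset.range (bx + 1)) ×ˢ (Finset.range (bY + 1))).erase (xβ, yβ),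
        ‖c p.1 p.2 m‖ < ‖c xβ yβ m‖)
    (f : ℕ → ℕ → ℕ → ℂ)
    (heq : ∀ x y z : ℕ, x ≤ Bx - bx → y ≤ BY - bY →
      ∑ i ∈ Finset.range (bx + 1), ∑ j ∈ Finset.range (bY + 1),
        ∑ k ∈ Finset.range (m + 1),
          c i j k * f (x + i) (y + j) (z + k) = 0)
    (hL : ∀ x y z : ℕ, (x ≤ Bx ∧ y ≤ BY) ∧
        ¬(xβ ≤ x ∧ x ≤ Bx - bx + xβ ∧ yβ ≤ y ∧ y ≤ BY - bY + yβ ∧ m ≤ z) →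
      f x y z = 0) :
    ∀ x y z : ℕ, x ≤ Bx → y ≤ BY → f x y z = 0 := by
  intro x y z
  induction z using Nat.strong_induction_on generalizing x y with
  | _ z IH =>
    intro hx hy
    by_cases hzm : z < m
    · exact hL x y z ⟨⟨hx, hy⟩, by omega⟩
    push_neg at hzm
    have hSne : ((Finset.range (Bx + 1)) ×ˢ (Finset.range (BY + 1))).Nonempty :=
      ⟨(0, 0), by simp⟩
    obtain ⟨p₀, hp₀S, hmax⟩ :=
      Finset.exists_max_image ((Finset.range (Bx + 1)) ×ˢ (Finset.range (BY + 1)))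
        (fun p => ‖f p.1 p.2 z‖) hSne
    have hp₀x : p₀.1 ≤ Bx := by
      have := (Finset.mem_product.mp hp₀S).1; simpa [Nat.lt_succ_iff] using this
    have hp₀y : p₀.2 ≤ BY := by
      have := (Finset.mem_product.mp hp₀S).2; simpa [Nat.lt_succ_iff] using this
    have hkey : f p₀.1 p₀.2 z = 0 := by
      by_contra h0
      have hM : 0 < ‖f p₀.1 p₀.2 z‖ := norm_pos_iff.mpr h0
      have hband : xβ ≤ p₀.1 ∧ p₀.1 ≤ Bx - bx + xβ ∧ yβ ≤ p₀.2 ∧ p₀.2 ≤ BY - bY + yβ := by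
        by_contra hnb
        exact h0 (hL p₀.1 p₀.2 z ⟨⟨hp₀x, hp₀y⟩, by omega⟩)
      obtain ⟨h1, h2, h3, h4⟩ := hband
      set x' := p₀.1 - xβ with hx'def
      set y' := p₀.2 - yβ with hy'def
      have hx' : x' ≤ Bx - bx := by omega
      have hy' : y' ≤ BY - bY := by omega
      have heq0 := heq x' y' (z - m) hx' hy'
      have hlevel : ∀ i ∈ Finset.range (bx + 1), ∀ j ∈ Finset.range (bY + 1),
          ∑ k ∈ Finset.range (m + 1), c i j k * f (x' + i) (y' + j) (z - m + k)
            = c i j m * f (x' + i) (y' + j) z := by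
        intro i hi j hj
        rw [Finset.mem_range] at hi hj
        rw [Finset.sum_range_succ]
        have hz0 : ∑ k ∈ Finset.range m, c i j k * f (x' + i) (y' + j) (z - m + k) = 0 := by
          apply Finset.sum_eq_zero
          intro k hk
          rw [Finset.mem_range] at hk
          rw [IH (z - m + k) (by omega) (x' + i) (y' + j) (by omega) (by omega), mul_zero]
        rw [hz0, zero_add]
        have : z - m + m = z := by omega
        rw [this]
      have hmain : ∑ p ∈ (Finset.range (bx + 1)) ×ˢ (Finset.range (bY + 1)),
          c p.1 p.2 m * f (x' + p.1) (y' + p.2) z = 0 := by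
        rw [Finset.sum_product]
        calc ∑ i ∈ Finset.range (bx + 1), ∑ j ∈ Finset.range (bY + 1),
              c i j m * f (x' + i) (y' + j) z
            = ∑ i ∈ Finset.range (bx + 1), ∑ j ∈ Finset.range (bY + 1),
              ∑ k ∈ Finset.range (m + 1), c i j k * f (x' + i) (y' + j) (z - m + k) := by
              refine Finset.sum_congr rfl fun i hi => Finset.sum_congr rfl fun j hj => ?_
              exact (hlevel i hi j hj).symm
          _ = 0 := heq0
      have hβR : (xβ, yβ) ∈ (Finset.range (bx + 1)) ×ˢ (Finset.range (bY + 1)) := by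
        simp [Finset.mem_product]; omega
      have hsplit := Finset.add_sum_erase _
        (fun p : ℕ × ℕ => c p.1 p.2 m * f (x' + p.1) (y' + p.2) z) hβR
      have hxx : x' + xβ = p₀.1 := by omega
      have hyy : y' + yβ = p₀.2 := by omega
      have hβeq : c xβ yβ m * f p₀.1 p₀.2 z
          = - ∑ p ∈ ((Finset.range (bx + 1)) ×ˢ (Finset.range (bY + 1))).erase (xβ, yβ),
              c p.1 p.2 m * f (x' + p.1) (y' + p.2) z := by
        have : c xβ yβ m * f (x' + xβ) (y' + yβ) z
            + ∑ p ∈ ((Finset.range (bx + 1)) ×ˢ (Finset.range (bY + 1))).erase (xβ, yβ),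
              c p.1 p.2 m * f (x' + p.1) (y' + p.2) z = 0 := by
          rw [hsplit]; exact hmain
        rw [hxx, hyy] at this
        exact eq_neg_of_add_eq_zero_left this
      have habs : ‖c xβ yβ m‖ * ‖f p₀.1 p₀.2 z‖
          ≤ (∑ p ∈ ((Finset.range (bx + 1)) ×ˢ (Finset.range (bY + 1))).erase (xβ, yβ),
              ‖c p.1 p.2 m‖) * ‖f p₀.1 p₀.2 z‖ := by
        rw [← norm_mul, hβeq, norm_neg, Finset.sum_mul]
        refine (norm_sum_le _ _).trans (Finset.sum_le_sum fun p hp => ?_)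
        rw [norm_mul]
        refine mul_le_mul_of_nonneg_left ?_ (norm_nonneg _)
        have hpR := Finset.mem_of_mem_erase hp
        rw [Finset.mem_product, Finset.mem_range, Finset.mem_range] at hpR
        exact hmax (x' + p.1, y' + p.2)
          (by simp [Finset.mem_product]; omega)
      have hlt : (∑ p ∈ ((Finset.range (bx + 1)) ×ˢ (Finset.range (bY + 1))).erase (xβ, yβ),
              ‖c p.1 p.2 m‖) * ‖f p₀.1 p₀.2 z‖
          < ‖c xβ yβ m‖ * ‖f p₀.1 p₀.2 z‖ :=
        mul_lt_mul_of_pos_right hdom hM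
      exact absurd (lt_of_le_of_lt habs hlt) (lt_irrefl _)
    have hxyS : (x, y) ∈ (Finset.range (Bx + 1)) ×ˢ (Finset.range (BY + 1)) := by
      simp [Finset.mem_product]; omega
    have := hmax (x, y) hxyS
    rw [hkey] at this
    simp only [norm_zero] at this
    exact norm_eq_zero.mp (le_antisymm this (norm_nonneg _))
end

section
/- Suppose the strict dominance condition |c(xβ, yβ, m)| > Σ_{(α₁,α₂) ≤ (bx,by), (α₁,α₂) ≠ (xβ,yβ)} |c(α₁, α₂, m)| holds. Then for every row index p = (x,y) ∈ I, the matrix T satisfies Σ_{q ∈ I, q ≠ p} |T(p,q)| ≤ Σ_{(α₁,α₂) ≤ (bx,by), (α₁,α₂) ≠ (xβ,yβ)} |c(α₁, α₂, m)| < |c(xβ, yβ, m)| = |T(p,p)|; that is, T is strictly diagonally dominant by rows. (The matrix of the one-layer linear system arising from the Cauchy problem is strictly diagonally dominant.) -/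
set_option maxHeartbeats 1000000 in
/-- The matrix of the one-layer linear system arising from the Cauchy problem is
strictly diagonally dominant by rows: for every row `p`, the sum of the absolute values
of the off-diagonal entries is at most the dominance sum, which is strictly smaller
than `|c xβ yβ m| = |T p p|`. The index set `I` is the set of interior indices
`{(x,y) : xβ ≤ x ≤ Bx − bx + xβ, yβ ≤ y ≤ BY − bY + yβ}` of a horizontal layer, and
`T (x,y) (x',y') = c (x'−x+xβ) (y'−y+yβ) m` when `0 ≤ x'−x+xβ ≤ bx` and
`0 ≤ y'−y+yβ ≤ bY` (as integers), and `0` otherwise. -/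
theorem layer_matrix_strictly_diagonally_dominant
    (Bx BY bx bY m : ℕ) (hbx : bx < Bx) (hbY : bY < BY) (hm : 1 ≤ m)
    (c : ℕ → ℕ → ℕ → ℂ)
    (xβ yβ : ℕ) (hxβ : xβ ≤ bx) (hyβ : yβ ≤ bY)
    (hc : c xβ yβ m ≠ 0)
    (hdom : ∑ p ∈ ((Finset.range (bx + 1)) ×ˢ (Finset.range (bY + 1))).erase (xβ, yβ),
        ‖c p.1 p.2 m‖ < ‖c xβ yβ m‖)
    (T : Matrix (↥((Finset.Icc xβ (Bx - bx + xβ)) ×ˢ (Finset.Icc yβ (BY - bY + yβ))))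
                (↥((Finset.Icc xβ (Bx - bx + xβ)) ×ˢ (Finset.Icc yβ (BY - bY + yβ)))) ℂ)
    (hT : ∀ p q, T p q =
      if 0 ≤ ((q : ℕ × ℕ).1 : ℤ) - ((p : ℕ × ℕ).1 : ℤ) + (xβ : ℤ) ∧
         ((q : ℕ × ℕ).1 : ℤ) - ((p : ℕ × ℕ).1 : ℤ) + (xβ : ℤ) ≤ (bx : ℤ) ∧
         0 ≤ ((q : ℕ × ℕ).2 : ℤ) - ((p : ℕ × ℕ).2 : ℤ) + (yβ : ℤ) ∧
         ((q : ℕ × ℕ).2 : ℤ) - ((p : ℕ × ℕ).2 : ℤ) + (yβ : ℤ) ≤ (bY : ℤ)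
      then c (((q : ℕ × ℕ).1 : ℤ) - ((p : ℕ × ℕ).1 : ℤ) + (xβ : ℤ)).toNat
             (((q : ℕ × ℕ).2 : ℤ) - ((p : ℕ × ℕ).2 : ℤ) + (yβ : ℤ)).toNat m
      else 0) :
    ∀ p, (∑ q ∈ Finset.univ.erase p, ‖T p q‖) ≤
          ∑ α ∈ ((Finset.range (bx + 1)) ×ˢ (Finset.range (bY + 1))).erase (xβ, yβ),
            ‖c α.1 α.2 m‖ ∧
        (∑ α ∈ ((Finset.range (bx + 1)) ×ˢ (Finset.range (bY + 1))).erase (xβ, yβ),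
            ‖c α.1 α.2 m‖) < ‖c xβ yβ m‖ ∧
        ‖c xβ yβ m‖ = ‖T p p‖ := by
  intro p
  have hdiag : T p p = c xβ yβ m := by
    rw [hT p p]
    have h1 : ((p : ℕ × ℕ).1 : ℤ) - ((p : ℕ × ℕ).1 : ℤ) + (xβ : ℤ) = (xβ : ℤ) := by ring
    have h2 : ((p : ℕ × ℕ).2 : ℤ) - ((p : ℕ × ℕ).2 : ℤ) + (yβ : ℤ) = (yβ : ℤ) := by ring
    rw [h1, h2, if_pos]
    · simp
    · exact ⟨Int.ofNat_nonneg xβ, by exact_mod_cast hxβ, Int.ofNat_nonneg yβ,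
        by exact_mod_cast hyβ⟩
  refine ⟨?_, hdom, by rw [hdiag]⟩
  -- bound the off-diagonal sum
  classical
  set S := (Finset.univ.erase p).filter (fun q => T p q ≠ 0) with hS
  have hsum : (∑ q ∈ Finset.univ.erase p, ‖T p q‖) =
      ∑ q ∈ S, ‖T p q‖ := by
    rw [hS]
    rw [Finset.sum_filter]
    apply Finset.sum_congr rfl
    intro q _
    split_ifs with h
    · rfl
    · simp [not_not.mp h]
  rw [hsum]
  set f : (↥((Finset.Icc xβ (Bx - bx + xβ)) ×ˢ (Finset.Icc yβ (BY - bY + yβ)))) → ℕ × ℕ :=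
    fun q => ((((q : ℕ × ℕ).1 : ℤ) - ((p : ℕ × ℕ).1 : ℤ) + (xβ : ℤ)).toNat,
      (((q : ℕ × ℕ).2 : ℤ) - ((p : ℕ × ℕ).2 : ℤ) + (yβ : ℤ)).toNat) with hf
  have hcond : ∀ q ∈ S,
      0 ≤ ((q : ℕ × ℕ).1 : ℤ) - ((p : ℕ × ℕ).1 : ℤ) + (xβ : ℤ) ∧
      ((q : ℕ × ℕ).1 : ℤ) - ((p : ℕ × ℕ).1 : ℤ) + (xβ : ℤ) ≤ (bx : ℤ) ∧
      0 ≤ ((q : ℕ × ℕ).2 : ℤ) - ((p : ℕ × ℕ).2 : ℤ) + (yβ : ℤ) ∧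
      ((q : ℕ × ℕ).2 : ℤ) - ((p : ℕ × ℕ).2 : ℤ) + (yβ : ℤ) ≤ (bY : ℤ) := by
    intro q hq
    rw [hS, Finset.mem_filter] at hq
    by_contra h
    exact hq.2 ((hT p q).trans (if_neg h))
  have hmaps : ∀ q ∈ S, f q ∈ ((Finset.range (bx + 1)) ×ˢ (Finset.range (bY + 1))).erase (xβ, yβ) := by
    intro q hq
    obtain ⟨h1, h2, h3, h4⟩ := hcond q hq
    simp only [hf]
    rw [Finset.mem_erase, Finset.mem_product]
    refine ⟨?_, ?_, ?_⟩
    · intro heq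
      have hx : (((q : ℕ × ℕ).1 : ℤ) - ((p : ℕ × ℕ).1 : ℤ) + (xβ : ℤ)).toNat = xβ :=
        congrArg Prod.fst heq
      have hy : (((q : ℕ × ℕ).2 : ℤ) - ((p : ℕ × ℕ).2 : ℤ) + (yβ : ℤ)).toNat = yβ :=
        congrArg Prod.snd heq
      have hx' : ((q : ℕ × ℕ).1 : ℤ) = ((p : ℕ × ℕ).1 : ℤ) := by
        have := Int.toNat_of_nonneg h1
        omega
      have hy' : ((q : ℕ × ℕ).2 : ℤ) = ((p : ℕ × ℕ).2 : ℤ) := by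
        have := Int.toNat_of_nonneg h3
        omega
      have hqp : q = p := by
        apply Subtype.ext
        apply Prod.ext
        · exact_mod_cast hx'
        · exact_mod_cast hy'
      rw [hS, Finset.mem_filter, Finset.mem_erase] at hq
      exact hq.1.1 hqp
    · rw [Finset.mem_range]; omega
    · rw [Finset.mem_range]; omega
  have hinj : Set.InjOn f S := by
    intro q hq q' hq' heq
    obtain ⟨h1, _, h3, _⟩ := hcond q hq
    obtain ⟨h1', _, h3', _⟩ := hcond q' hq'
    have hx : (((q : ℕ × ℕ).1 : ℤ) - ((p : ℕ × ℕ).1 : ℤ) + (xβ : ℤ)).toNat =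
        (((q' : ℕ × ℕ).1 : ℤ) - ((p : ℕ × ℕ).1 : ℤ) + (xβ : ℤ)).toNat :=
      congrArg Prod.fst heq
    have hy : (((q : ℕ × ℕ).2 : ℤ) - ((p : ℕ × ℕ).2 : ℤ) + (yβ : ℤ)).toNat =
        (((q' : ℕ × ℕ).2 : ℤ) - ((p : ℕ × ℕ).2 : ℤ) + (yβ : ℤ)).toNat :=
      congrArg Prod.snd heq
    have e1 := Int.toNat_of_nonneg h1
    have e1' := Int.toNat_of_nonneg h1'
    have e3 := Int.toNat_of_nonneg h3
    have e3' := Int.toNat_of_nonneg h3'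
    apply Subtype.ext
    apply Prod.ext
    · omega
    · omega
  have hval : ∀ q ∈ S, ‖T p q‖ = ‖c (f q).1 (f q).2 m‖ := by
    intro q hq
    rw [hT p q, if_pos (hcond q hq)]
  calc ∑ q ∈ S, ‖T p q‖
      = ∑ q ∈ S, ‖c (f q).1 (f q).2 m‖ := Finset.sum_congr rfl hval
    _ = ∑ α ∈ S.image f, ‖c α.1 α.2 m‖ := (Finset.sum_image (f := fun α : ℕ × ℕ => ‖c α.1 α.2 m‖) (fun a ha b hb h => hinj ha hb h)).symm
    _ ≤ ∑ α ∈ ((Finset.range (bx + 1)) ×ˢ (Finset.range (bY + 1))).erase (xβ, yβ),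
          ‖c α.1 α.2 m‖ := by
        apply Finset.sum_le_sum_of_subset_of_nonneg
        · intro α hα
          obtain ⟨q, hq, rfl⟩ := Finset.mem_image.mp hα
          exact hmaps q hq
        · intro _ _ _
          exact norm_nonneg _
end

section
/- Suppose the strict dominance condition |c(xβ, yβ, m)| > Σ_{(α₁,α₂) ≤ (bx,by), (α₁,α₂) ≠ (xβ,yβ)} |c(α₁, α₂, m)| holds. Then the matrix T is invertible (equivalently, det T ≠ 0). (Invertibility of the layer matrix of the Cauchy problem.) -/
set_option maxHeartbeats 1000000


/-- Invertibility of the layer matrix of the Cauchy problem: under the strict dominance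
condition on the top-layer coefficients, the matrix `T` of the one-layer linear system
is invertible, equivalently `det T ≠ 0`. The index set `I` is the set of interior
indices `{(x,y) : xβ ≤ x ≤ Bx − bx + xβ, yβ ≤ y ≤ BY − bY + yβ}` of a horizontal layer,
and `T (x,y) (x',y') = c (x'−x+xβ) (y'−y+yβ) m` when `0 ≤ x'−x+xβ ≤ bx` and
`0 ≤ y'−y+yβ ≤ bY` (as integers), and `0` otherwise. -/
theorem layer_matrix_invertible
    (Bx BY bx bY m : ℕ) (hbx : bx < Bx) (hbY : bY < BY) (hm : 1 ≤ m)
    (c : ℕ → ℕ → ℕ → ℂ)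
    (xβ yβ : ℕ) (hxβ : xβ ≤ bx) (hyβ : yβ ≤ bY)
    (hc : c xβ yβ m ≠ 0)
    (hdom : ∑ p ∈ ((Finset.range (bx + 1)) ×ˢ (Finset.range (bY + 1))).erase (xβ, yβ),
        ‖c p.1 p.2 m‖ < ‖c xβ yβ m‖)
    (T : Matrix (↥((Finset.Icc xβ (Bx - bx + xβ)) ×ˢ (Finset.Icc yβ (BY - bY + yβ))))
                (↥((Finset.Icc xβ (Bx - bx + xβ)) ×ˢ (Finset.Icc yβ (BY - bY + yβ)))) ℂ)
    (hT : ∀ p q, T p q =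
      if 0 ≤ ((q : ℕ × ℕ).1 : ℤ) - ((p : ℕ × ℕ).1 : ℤ) + (xβ : ℤ) ∧
         ((q : ℕ × ℕ).1 : ℤ) - ((p : ℕ × ℕ).1 : ℤ) + (xβ : ℤ) ≤ (bx : ℤ) ∧
         0 ≤ ((q : ℕ × ℕ).2 : ℤ) - ((p : ℕ × ℕ).2 : ℤ) + (yβ : ℤ) ∧
         ((q : ℕ × ℕ).2 : ℤ) - ((p : ℕ × ℕ).2 : ℤ) + (yβ : ℤ) ≤ (bY : ℤ)
      then c (((q : ℕ × ℕ).1 : ℤ) - ((p : ℕ × ℕ).1 : ℤ) + (xβ : ℤ)).toNat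
             (((q : ℕ × ℕ).2 : ℤ) - ((p : ℕ × ℕ).2 : ℤ) + (yβ : ℤ)).toNat m
      else 0) :
    IsUnit T ∧ T.det ≠ 0 := by
  classical
  have key : ∀ p, ∑ q ∈ Finset.univ.erase p, ‖T p q‖ < ‖T p p‖ := by
    intro p
    have hdiag : T p p = c xβ yβ m := by
      rw [hT p p]
      rw [if_pos (by constructor <;> [omega; (constructor <;> [omega; (constructor <;> omega)])])]
      congr 1 <;> [skip; congr 1] <;> omega
    rw [hdiag]
    set P : {x // x ∈ (Finset.Icc xβ (Bx - bx + xβ)) ×ˢ (Finset.Icc yβ (BY - bY + yβ))} → Prop :=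
      fun q => 0 ≤ ((q : ℕ × ℕ).1 : ℤ) - ((p : ℕ × ℕ).1 : ℤ) + (xβ : ℤ) ∧
         ((q : ℕ × ℕ).1 : ℤ) - ((p : ℕ × ℕ).1 : ℤ) + (xβ : ℤ) ≤ (bx : ℤ) ∧
         0 ≤ ((q : ℕ × ℕ).2 : ℤ) - ((p : ℕ × ℕ).2 : ℤ) + (yβ : ℤ) ∧
         ((q : ℕ × ℕ).2 : ℤ) - ((p : ℕ × ℕ).2 : ℤ) + (yβ : ℤ) ≤ (bY : ℤ) with hP
    set g : {x // x ∈ (Finset.Icc xβ (Bx - bx + xβ)) ×ˢ (Finset.Icc yβ (BY - bY + yβ))} → ℕ × ℕ :=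
      fun q => ((((q : ℕ × ℕ).1 : ℤ) - ((p : ℕ × ℕ).1 : ℤ) + (xβ : ℤ)).toNat,
                (((q : ℕ × ℕ).2 : ℤ) - ((p : ℕ × ℕ).2 : ℤ) + (yβ : ℤ)).toNat) with hg
    have h1 : ∑ q ∈ (Finset.univ.erase p).filter P, ‖T p q‖
        = ∑ q ∈ Finset.univ.erase p, ‖T p q‖ := by
      refine Finset.sum_filter_of_ne ?_
      intro q _ hne
      by_contra hPq
      rw [hT p q, if_neg hPq] at hne
      simp at hne
    rw [← h1]
    have h2 : ∀ q ∈ (Finset.univ.erase p).filter P,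
        ‖T p q‖ = ‖c (g q).1 (g q).2 m‖ := by
      intro q hq
      rw [Finset.mem_filter] at hq
      rw [hT p q, if_pos hq.2]
    rw [Finset.sum_congr rfl h2]
    have hinj : Set.InjOn g ((Finset.univ.erase p).filter P) := by
      intro q hq q' hq' hgq
      simp only [Finset.coe_filter, Set.mem_setOf_eq] at hq hq'
      have h1 := hq.2.1
      have h2 := hq.2.2.1
      have h3 := hq'.2.1
      have h4 := hq'.2.2.1
      have e1 := congrArg Prod.fst hgq
      have e2 := congrArg Prod.snd hgq
      simp only [hg] at e1 e2
      have : (q : ℕ × ℕ).1 = (q' : ℕ × ℕ).1 := by omega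
      have : (q : ℕ × ℕ).2 = (q' : ℕ × ℕ).2 := by omega
      exact Subtype.ext (Prod.ext ‹_› ‹_›)
    have himg := (Finset.sum_image (s := (Finset.univ.erase p).filter P) (g := g)
      (f := fun r : ℕ × ℕ => ‖c r.1 r.2 m‖) (fun q hq q' hq' h =>
        hinj (Finset.mem_coe.mpr hq) (Finset.mem_coe.mpr hq') h))
    rw [← himg]
    refine lt_of_le_of_lt (Finset.sum_le_sum_of_subset_of_nonneg ?_
      (fun _ _ _ => norm_nonneg _)) hdom
    intro r hr
    rw [Finset.mem_image] at hr
    obtain ⟨q, hq, hr⟩ := hr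
    rw [Finset.mem_filter, Finset.mem_erase] at hq
    subst hr
    obtain ⟨⟨hqp, -⟩, c1, c2, c3, c4⟩ := hq
    rw [Finset.mem_erase, Finset.mem_product]
    constructor
    · intro heq
      have e1 := congrArg Prod.fst heq
      have e2 := congrArg Prod.snd heq
      simp only [hg] at e1 e2
      apply hqp
      refine Subtype.ext (Prod.ext ?_ ?_) <;> omega
    · constructor <;> simp only [hg, Finset.mem_range] <;> omega
  have hdet : T.det ≠ 0 := det_ne_zero_of_sum_row_lt_diag key
  refine ⟨?_, hdet⟩
  rw [Matrix.isUnit_iff_isUnit_det]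
  exact isUnit_iff_ne_zero.mpr hdet
end

section
/- Suppose the strict dominance condition |c(xβ, yβ, m)| > Σ_{(α₁,α₂) ≤ (bx,by), (α₁,α₂) ≠ (xβ,yβ)} |c(α₁, α₂, m)| holds. Fix a height z₀ ∈ ℕ, a right-hand side g : ℕ³ → ℂ, and prescribed values u(x,y,k) ∈ ℂ for all (x,y) with x ≤ Bx, y ≤ By and all k < m + z₀ (the values of the solution on the m + z₀ previous layers), together with prescribed boundary values v(x,y) ∈ ℂ for (x,y) ∈ {(x,y) : x ≤ Bx, y ≤ By} \ I (the values on the boundary strip of layer m + z₀). Then there exists exactly one function w : I → ℂ such that the function f on layers 0,…,m+z₀ defined by f(x,y,k) = u(x,y,k) for k < m + z₀, f(x,y,m+z₀) = v(x,y) for (x,y) ∉ I, and f(x,y,m+z₀) = w(x,y) for (x,y) ∈ I, satisfies Σ_{i ≤ bx, j ≤ by, k ≤ m} c(i,j,k) · f(x+i, y+j, z₀+k) = g(x,y,z₀) for all x ≤ Bx − bx, y ≤ By − by. (The layer-by-layer step of the algorithm determines the interior values of each new layer uniquely.) -/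
/-- The layer-by-layer step of the algorithm determines the interior values of each new
layer uniquely: given the values `u` of the solution on the `m + z₀` previous layers and
boundary values `v` on the boundary strip of layer `m + z₀`, under the strict dominance
condition there is exactly one assignment `w` of values at the interior indices
`I = {(x,y) : xβ ≤ x ≤ Bx − bx + xβ, yβ ≤ y ≤ BY − bY + yβ}` of layer `m + z₀` such
that the resulting function satisfies the difference equation with right-hand side `g`
at all points `(x, y, z₀)` with `x ≤ Bx − bx`, `y ≤ BY − bY`. -/
theorem layer_step_unique
    (Bx BY bx bY m : ℕ) (hbx : bx < Bx) (hbY : bY < BY) (hm : 1 ≤ m)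
    (c : ℕ → ℕ → ℕ → ℂ)
    (xβ yβ : ℕ) (hxβ : xβ ≤ bx) (hyβ : yβ ≤ bY)
    (hc : c xβ yβ m ≠ 0)
    (hdom : ∑ p ∈ ((Finset.range (bx + 1)) ×ˢ (Finset.range (bY + 1))).erase (xβ, yβ),
        ‖c p.1 p.2 m‖ < ‖c xβ yβ m‖)
    (z₀ : ℕ) (g : ℕ → ℕ → ℕ → ℂ)
    (u : ℕ → ℕ → ℕ → ℂ) (v : ℕ → ℕ → ℂ) :
    ∃! w : (↥((Finset.Icc xβ (Bx - bx + xβ)) ×ˢ (Finset.Icc yβ (BY - bY + yβ)))) → ℂ,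
      ∀ x y : ℕ, x ≤ Bx - bx → y ≤ BY - bY →
        ∑ i ∈ Finset.range (bx + 1), ∑ j ∈ Finset.range (bY + 1),
          ∑ k ∈ Finset.range (m + 1),
            c i j k *
              (if z₀ + k < m + z₀ then u (x + i) (y + j) (z₀ + k)
               else if h : (x + i, y + j) ∈
                   (Finset.Icc xβ (Bx - bx + xβ)) ×ˢ (Finset.Icc yβ (BY - bY + yβ)) then
                 w ⟨(x + i, y + j), h⟩
               else v (x + i) (y + j)) = g x y z₀ := by
  set S : Finset (ℕ × ℕ) :=
    (Finset.Icc xβ (Bx - bx + xβ)) ×ˢ (Finset.Icc yβ (BY - bY + yβ)) with hS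
  -- coordinates of interior points
  have hcoord : ∀ q : ↥S, xβ ≤ (q : ℕ × ℕ).1 ∧ (q : ℕ × ℕ).1 ≤ Bx - bx + xβ ∧
      yβ ≤ (q : ℕ × ℕ).2 ∧ (q : ℕ × ℕ).2 ≤ BY - bY + yβ := by
    intro q
    have h := Finset.mem_product.mp q.2
    rw [Finset.mem_Icc, Finset.mem_Icc] at h
    exact ⟨h.1.1, h.1.2, h.2.1, h.2.2⟩
  have hmem : ∀ x y : ℕ, x ≤ Bx - bx → y ≤ BY - bY → (x + xβ, y + yβ) ∈ S := by
    intro x y hx hy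
    rw [hS, Finset.mem_product, Finset.mem_Icc, Finset.mem_Icc]
    omega
  -- the matrix of the linear system
  set A : Matrix ↥S ↥S ℂ := fun q q' =>
    ∑ i ∈ Finset.range (bx + 1), ∑ j ∈ Finset.range (bY + 1),
      if ((q : ℕ × ℕ).1 - xβ + i, (q : ℕ × ℕ).2 - yβ + j) = (q' : ℕ × ℕ) then c i j m
      else 0 with hA
  -- single-element sums over the subtype
  have hsingleR : ∀ (t : ℕ × ℕ) (a : ℝ),
      (∑ q' : ↥S, if t = (q' : ℕ × ℕ) then a else 0) = if t ∈ S then a else 0 := by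
    intro t a
    rw [Finset.sum_coe_sort S (fun p => if t = p then a else 0)]
    exact Finset.sum_ite_eq S t fun _ => a
  have hsingleW : ∀ (w : ↥S → ℂ) (t : ℕ × ℕ) (a : ℂ),
      (∑ q' : ↥S, (if t = (q' : ℕ × ℕ) then a else 0) * w q')
        = if h : t ∈ S then a * w ⟨t, h⟩ else 0 := by
    intro w t a
    by_cases h : t ∈ S
    · rw [dif_pos h]
      have he : ∀ q' : ↥S, (t = (q' : ℕ × ℕ)) = ((⟨t, h⟩ : ↥S) = q') := by
        intro q'; rw [eq_iff_iff]; constructor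
        · intro e; exact Subtype.ext e
        · intro e; exact congrArg Subtype.val e
      simp_rw [he, ite_mul, zero_mul]
      simp [Finset.sum_ite_eq]
    · rw [dif_neg h]
      refine Finset.sum_eq_zero fun q' _ => ?_
      rw [if_neg, zero_mul]
      intro e; exact h (e ▸ q'.2)
  -- diagonal entries
  have hdiag : ∀ q : ↥S, A q q = c xβ yβ m := by
    intro q
    obtain ⟨h1, h2, h3, h4⟩ := hcoord q
    rw [hA]
    have he : ∀ i j : ℕ,
        (((q : ℕ × ℕ).1 - xβ + i, (q : ℕ × ℕ).2 - yβ + j) = (q : ℕ × ℕ))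
          = (i = xβ ∧ j = yβ) := by
      intro i j; rw [eq_iff_iff, Prod.ext_iff]
      constructor <;> intro hh <;> [omega; (obtain ⟨rfl, rfl⟩ := hh; omega)]
    simp_rw [he, ite_and]
    rw [Finset.sum_eq_single_of_mem xβ (Finset.mem_range.mpr (by omega))
      (fun i _ hne => Finset.sum_eq_zero fun j _ => if_neg hne)]
    rw [Finset.sum_eq_single_of_mem yβ (Finset.mem_range.mpr (by omega))
      (fun j _ hne => by rw [if_pos rfl, if_neg hne])]
    rw [if_pos rfl, if_pos rfl]
  -- strict diagonal dominance of rows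
  have hrow : ∀ q : ↥S, ∑ q' ∈ Finset.univ.erase q, ‖A q q'‖ < ‖A q q‖ := by
    intro q
    obtain ⟨h1, h2, h3, h4⟩ := hcoord q
    set x := (q : ℕ × ℕ).1 - xβ with hx
    set y := (q : ℕ × ℕ).2 - yβ with hy
    set P : Finset (ℕ × ℕ) := (Finset.range (bx + 1)) ×ˢ (Finset.range (bY + 1)) with hP
    have habs : ∀ q' : ↥S, ‖A q q'‖ ≤
        ∑ p ∈ P, (if (x + p.1, y + p.2) = (q' : ℕ × ℕ) then ‖c p.1 p.2 m‖ else 0) := by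
      intro q'
      rw [hA, hP]
      rw [show (∑ p ∈ (Finset.range (bx + 1)) ×ˢ (Finset.range (bY + 1)),
          (if (x + p.1, y + p.2) = (q' : ℕ × ℕ) then ‖c p.1 p.2 m‖ else 0))
        = ∑ i ∈ Finset.range (bx + 1), ∑ j ∈ Finset.range (bY + 1),
            (if (x + i, y + j) = (q' : ℕ × ℕ) then ‖c i j m‖ else 0) by
          rw [Finset.sum_product]]
      refine (norm_sum_le _ _).trans ?_
      refine Finset.sum_le_sum fun i _ => ?_
      refine (norm_sum_le _ _).trans ?_
      refine Finset.sum_le_sum fun j _ => ?_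
      split <;> simp
    have hβP : (xβ, yβ) ∈ P := by
      rw [hP, Finset.mem_product, Finset.mem_range, Finset.mem_range]; omega
    calc ∑ q' ∈ Finset.univ.erase q, ‖A q q'‖
        ≤ ∑ q' ∈ Finset.univ.erase q, ∑ p ∈ P,
            (if (x + p.1, y + p.2) = (q' : ℕ × ℕ) then ‖c p.1 p.2 m‖ else 0) :=
          Finset.sum_le_sum fun q' _ => habs q'
      _ = ∑ p ∈ P, ∑ q' ∈ Finset.univ.erase q,
            (if (x + p.1, y + p.2) = (q' : ℕ × ℕ) then ‖c p.1 p.2 m‖ else 0) :=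
          Finset.sum_comm
      _ ≤ ∑ p ∈ P.erase (xβ, yβ), ‖c p.1 p.2 m‖ := by
          rw [← Finset.add_sum_erase P _ hβP]
          have hz : (∑ q' ∈ Finset.univ.erase q,
              (if (x + xβ, y + yβ) = (q' : ℕ × ℕ) then ‖c xβ yβ m‖ else 0)) = 0 := by
            refine Finset.sum_eq_zero fun q' hq' => ?_
            rw [if_neg]
            intro e
            have h5 : x + xβ = (q : ℕ × ℕ).1 := by omega
            have h6 : y + yβ = (q : ℕ × ℕ).2 := by omega
            have hqv : (x + xβ, y + yβ) = (q : ℕ × ℕ) := by rw [h5, h6]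
            exact (Finset.ne_of_mem_erase hq') (Subtype.ext (e.symm.trans hqv))
          rw [hz, zero_add]
          refine Finset.sum_le_sum fun p _ => ?_
          refine le_trans (Finset.sum_le_sum_of_subset_of_nonneg
            (Finset.erase_subset _ _) (fun q' _ _ => by split <;> simp)) ?_
          rw [hsingleR (x + p.1, y + p.2) ‖c p.1 p.2 m‖]
          split <;> simp
      _ < ‖A q q‖ := by
          rw [hdiag q]
          simpa using hdom
  have hdet : A.det ≠ 0 := det_ne_zero_of_sum_row_lt_diag hrow
  have hunit : IsUnit A.det := isUnit_iff_ne_zero.mpr hdet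
  -- the constant part
  set C : ℕ → ℕ → ℂ := fun x y =>
    ∑ i ∈ Finset.range (bx + 1), ∑ j ∈ Finset.range (bY + 1),
      ((∑ k ∈ Finset.range m, c i j k * u (x + i) (y + j) (z₀ + k)) +
        (if (x + i, y + j) ∈ S then 0 else c i j m * v (x + i) (y + j))) with hC
  -- key decomposition
  have key : ∀ (w : ↥S → ℂ) (x y : ℕ) (hq : (x + xβ, y + yβ) ∈ S),
      (∑ i ∈ Finset.range (bx + 1), ∑ j ∈ Finset.range (bY + 1),
        ∑ k ∈ Finset.range (m + 1),
          c i j k *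
            (if z₀ + k < m + z₀ then u (x + i) (y + j) (z₀ + k)
             else if h : (x + i, y + j) ∈ S then w ⟨(x + i, y + j), h⟩
             else v (x + i) (y + j)))
        = A.mulVec w ⟨(x + xβ, y + yβ), hq⟩ + C x y := by
    intro w x y hq
    have hmv : A.mulVec w ⟨(x + xβ, y + yβ), hq⟩
        = ∑ i ∈ Finset.range (bx + 1), ∑ j ∈ Finset.range (bY + 1),
            (if h : (x + i, y + j) ∈ S then c i j m * w ⟨(x + i, y + j), h⟩ else 0) := by
      rw [Matrix.mulVec, dotProduct]
      have : ∀ q' : ↥S, A ⟨(x + xβ, y + yβ), hq⟩ q' * w q'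
          = ∑ i ∈ Finset.range (bx + 1), ∑ j ∈ Finset.range (bY + 1),
              (if (x + i, y + j) = (q' : ℕ × ℕ) then c i j m else 0) * w q' := by
        intro q'
        rw [hA]
        simp only [Nat.add_sub_cancel]
        rw [Finset.sum_mul]
        refine Finset.sum_congr rfl fun i _ => ?_
        rw [Finset.sum_mul]
      simp_rw [this]
      rw [Finset.sum_comm]
      refine Finset.sum_congr rfl fun i _ => ?_
      rw [Finset.sum_comm]
      refine Finset.sum_congr rfl fun j _ => ?_
      exact hsingleW w (x + i, y + j) (c i j m)
    have hsplit : ∀ i j : ℕ,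
        (∑ k ∈ Finset.range (m + 1),
          c i j k *
            (if z₀ + k < m + z₀ then u (x + i) (y + j) (z₀ + k)
             else if h : (x + i, y + j) ∈ S then w ⟨(x + i, y + j), h⟩
             else v (x + i) (y + j)))
        = (if h : (x + i, y + j) ∈ S then c i j m * w ⟨(x + i, y + j), h⟩ else 0)
          + ((∑ k ∈ Finset.range m, c i j k * u (x + i) (y + j) (z₀ + k)) +
              (if (x + i, y + j) ∈ S then 0 else c i j m * v (x + i) (y + j))) := by
      intro i j
      rw [Finset.sum_range_succ]
      have h1 : (∑ k ∈ Finset.range m,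
          c i j k *
            (if z₀ + k < m + z₀ then u (x + i) (y + j) (z₀ + k)
             else if h : (x + i, y + j) ∈ S then w ⟨(x + i, y + j), h⟩
             else v (x + i) (y + j)))
          = ∑ k ∈ Finset.range m, c i j k * u (x + i) (y + j) (z₀ + k) := by
        refine Finset.sum_congr rfl fun k hk => ?_
        rw [Finset.mem_range] at hk
        rw [if_pos (by omega)]
      rw [h1, if_neg (by omega)]
      by_cases h : (x + i, y + j) ∈ S
      · rw [dif_pos h, dif_pos h, if_pos h]; ring
      · rw [dif_neg h, dif_neg h, if_neg h]; ring
    simp_rw [hsplit]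
    rw [hmv, hC]
    rw [← Finset.sum_add_distrib]
    refine Finset.sum_congr rfl fun i _ => ?_
    rw [← Finset.sum_add_distrib]
  -- right-hand side vector
  set b : ↥S → ℂ := fun q =>
    g ((q : ℕ × ℕ).1 - xβ) ((q : ℕ × ℕ).2 - yβ) z₀
      - C ((q : ℕ × ℕ).1 - xβ) ((q : ℕ × ℕ).2 - yβ) with hb
  have hequiv : ∀ w : ↥S → ℂ,
      (∀ x y : ℕ, x ≤ Bx - bx → y ≤ BY - bY →
        (∑ i ∈ Finset.range (bx + 1), ∑ j ∈ Finset.range (bY + 1),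
          ∑ k ∈ Finset.range (m + 1),
            c i j k *
              (if z₀ + k < m + z₀ then u (x + i) (y + j) (z₀ + k)
               else if h : (x + i, y + j) ∈ S then w ⟨(x + i, y + j), h⟩
               else v (x + i) (y + j))) = g x y z₀)
        ↔ A.mulVec w = b := by
    intro w
    constructor
    · intro hP
      funext q
      obtain ⟨h1, h2, h3, h4⟩ := hcoord q
      have hx : (q : ℕ × ℕ).1 - xβ ≤ Bx - bx := by omega
      have hy : (q : ℕ × ℕ).2 - yβ ≤ BY - bY := by omega
      have h5 : (q : ℕ × ℕ).1 - xβ + xβ = (q : ℕ × ℕ).1 := by omega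
      have h6 : (q : ℕ × ℕ).2 - yβ + yβ = (q : ℕ × ℕ).2 := by omega
      have hqv : ((q : ℕ × ℕ).1 - xβ + xβ, (q : ℕ × ℕ).2 - yβ + yβ) = (q : ℕ × ℕ) := by
        rw [h5, h6]
      have hq' : ((q : ℕ × ℕ).1 - xβ + xβ, (q : ℕ × ℕ).2 - yβ + yβ) ∈ S := by
        rw [hqv]; exact q.2
      have hE := hP _ _ hx hy
      rw [key w _ _ hq'] at hE
      have hqq : (⟨((q : ℕ × ℕ).1 - xβ + xβ, (q : ℕ × ℕ).2 - yβ + yβ), hq'⟩ : ↥S) = q :=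
        Subtype.ext hqv
      rw [hqq] at hE
      rw [hb]
      exact eq_sub_of_add_eq hE
    · intro hMV x y hx hy
      have hq' : (x + xβ, y + yβ) ∈ S := hmem x y hx hy
      rw [key w x y hq', hMV, hb]
      simp only [Nat.add_sub_cancel]
      ring
  have hmul : A * A⁻¹ = 1 := Matrix.mul_nonsing_inv A hunit
  have hmul' : A⁻¹ * A = 1 := Matrix.nonsing_inv_mul A hunit
  refine ⟨A⁻¹.mulVec b, ?_, ?_⟩
  · refine (hequiv _).mpr ?_
    rw [Matrix.mulVec_mulVec, hmul, Matrix.one_mulVec]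
  · intro w' hw'
    have h1 := (hequiv w').mp hw'
    calc w' = (A⁻¹ * A).mulVec w' := by rw [hmul', Matrix.one_mulVec]
      _ = A⁻¹.mulVec (A.mulVec w') := by rw [Matrix.mulVec_mulVec]
      _ = A⁻¹.mulVec b := by rw [h1]
end

section
/- Suppose the strict dominance condition |c(xβ, yβ, m)| > Σ_{(α₁,α₂) ≤ (bx,by), (α₁,α₂) ≠ (xβ,yβ)} |c(α₁, α₂, m)| holds, and let f₁, f₂ : ℕ³ → ℂ both satisfy Σ_{i ≤ bx, j ≤ by, k ≤ m} c(i,j,k) · f(x+i, y+j, z+k) = g(x,y,z) for all (x,y,z) ∈ E with the same right-hand side g, and f₁ = f₂ = φ on L with the same initial data φ. Fix N ∈ ℕ. If f₁ and f₂ agree at all points of Π of height z < N + m, then f₁ and f₂ agree at all points of Π of height z ≤ N + m. (Inductive layer-by-layer uniqueness: agreement on the first m + N layers propagates to the next layer.) -/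
/-- Inductive layer-by-layer uniqueness: if two solutions `f₁, f₂` of the Cauchy
problem (same equation on `E`, same right-hand side `g`, same initial data `φ` on
`L = Π \ Π_β`) agree at all points of `Π` of height `z < N + m`, then they agree at all
points of `Π` of height `z ≤ N + m`. -/
theorem layerwise_uniqueness_step
    (Bx BY bx bY m : ℕ) (hbx : bx < Bx) (hbY : bY < BY) (hm : 1 ≤ m)
    (c : ℕ → ℕ → ℕ → ℂ)
    (xβ yβ : ℕ) (hxβ : xβ ≤ bx) (hyβ : yβ ≤ bY)
    (hc : c xβ yβ m ≠ 0)
    (hdom : ∑ p ∈ ((Finset.range (bx + 1)) ×ˢ (Finset.range (bY + 1))).erase (xβ, yβ),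
        ‖c p.1 p.2 m‖ < ‖c xβ yβ m‖)
    (g φ f₁ f₂ : ℕ → ℕ → ℕ → ℂ)
    (heq₁ : ∀ x y z : ℕ, x ≤ Bx - bx → y ≤ BY - bY →
      ∑ i ∈ Finset.range (bx + 1), ∑ j ∈ Finset.range (bY + 1),
        ∑ k ∈ Finset.range (m + 1),
          c i j k * f₁ (x + i) (y + j) (z + k) = g x y z)
    (heq₂ : ∀ x y z : ℕ, x ≤ Bx - bx → y ≤ BY - bY →
      ∑ i ∈ Finset.range (bx + 1), ∑ j ∈ Finset.range (bY + 1),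
        ∑ k ∈ Finset.range (m + 1),
          c i j k * f₂ (x + i) (y + j) (z + k) = g x y z)
    (hL₁ : ∀ x y z : ℕ, (x ≤ Bx ∧ y ≤ BY) ∧
        ¬(xβ ≤ x ∧ x ≤ Bx - bx + xβ ∧ yβ ≤ y ∧ y ≤ BY - bY + yβ ∧ m ≤ z) →
      f₁ x y z = φ x y z)
    (hL₂ : ∀ x y z : ℕ, (x ≤ Bx ∧ y ≤ BY) ∧
        ¬(xβ ≤ x ∧ x ≤ Bx - bx + xβ ∧ yβ ≤ y ∧ y ≤ BY - bY + yβ ∧ m ≤ z) →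
      f₂ x y z = φ x y z)
    (N : ℕ)
    (hind : ∀ x y z : ℕ, x ≤ Bx → y ≤ BY → z < N + m → f₁ x y z = f₂ x y z) :
    ∀ x y z : ℕ, x ≤ Bx → y ≤ BY → z ≤ N + m → f₁ x y z = f₂ x y z := by
  intro x y z hx hy hz
  rcases Nat.lt_or_ge z (N + m) with h | h
  · exact hind x y z hx hy h
  have hzeq : z = N + m := le_antisymm hz h
  subst hzeq
  have hbxle : bx ≤ Bx := hbx.le
  have hbyle : bY ≤ BY := hbY.le
  set u : ℕ → ℕ → ℂ := fun a b => f₁ a b (N + m) - f₂ a b (N + m) with hu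
  suffices hsuff : u x y = 0 by
    have := hsuff
    simpa [hu, sub_eq_zero] using this
  -- u vanishes outside the band
  have hout : ∀ a b : ℕ, a ≤ Bx → b ≤ BY →
      ¬(xβ ≤ a ∧ a ≤ Bx - bx + xβ ∧ yβ ≤ b ∧ b ≤ BY - bY + yβ) → u a b = 0 := by
    intro a b ha hb hnot
    have h1 := hL₁ a b (N + m) ⟨⟨ha, hb⟩, by tauto⟩
    have h2 := hL₂ a b (N + m) ⟨⟨ha, hb⟩, by tauto⟩
    simp [hu, h1, h2]
  -- homogeneous equation on the top layer
  have heqU : ∀ a b : ℕ, a ≤ Bx - bx → b ≤ BY - bY →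
      ∑ i ∈ Finset.range (bx + 1), ∑ j ∈ Finset.range (bY + 1),
        c i j m * u (a + i) (b + j) = 0 := by
    intro a b ha hb
    have e1 := heq₁ a b N ha hb
    have e2 := heq₂ a b N ha hb
    have e : ∑ i ∈ Finset.range (bx + 1), ∑ j ∈ Finset.range (bY + 1),
        ∑ k ∈ Finset.range (m + 1),
          c i j k * (f₁ (a + i) (b + j) (N + k) - f₂ (a + i) (b + j) (N + k)) = 0 := by
      have hsub : (∑ i ∈ Finset.range (bx + 1), ∑ j ∈ Finset.range (bY + 1),
          ∑ k ∈ Finset.range (m + 1), c i j k * f₁ (a + i) (b + j) (N + k))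
          - (∑ i ∈ Finset.range (bx + 1), ∑ j ∈ Finset.range (bY + 1),
          ∑ k ∈ Finset.range (m + 1), c i j k * f₂ (a + i) (b + j) (N + k)) = 0 := by
        rw [e1, e2, sub_self]
      rw [← hsub]
      simp [Finset.sum_sub_distrib, mul_sub]
    have key : ∀ i ∈ Finset.range (bx + 1), ∀ j ∈ Finset.range (bY + 1),
        ∑ k ∈ Finset.range (m + 1),
          c i j k * (f₁ (a + i) (b + j) (N + k) - f₂ (a + i) (b + j) (N + k))
          = c i j m * u (a + i) (b + j) := by
      intro i hi j hj
      have hi' : i ≤ bx := Finset.mem_range_succ_iff.mp hi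
      have hj' : j ≤ bY := Finset.mem_range_succ_iff.mp hj
      have hax : a + i ≤ Bx := by omega
      have hby : b + j ≤ BY := by omega
      rw [Finset.sum_range_succ]
      have hz0 : ∀ k ∈ Finset.range m,
          c i j k * (f₁ (a + i) (b + j) (N + k) - f₂ (a + i) (b + j) (N + k)) = 0 := by
        intro k hk
        have hk' : k < m := Finset.mem_range.mp hk
        have : f₁ (a + i) (b + j) (N + k) = f₂ (a + i) (b + j) (N + k) :=
          hind _ _ _ hax hby (by omega)
        simp [this]
      rw [Finset.sum_eq_zero hz0, zero_add]
    calc ∑ i ∈ Finset.range (bx + 1), ∑ j ∈ Finset.range (bY + 1),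
          c i j m * u (a + i) (b + j)
        = ∑ i ∈ Finset.range (bx + 1), ∑ j ∈ Finset.range (bY + 1),
          ∑ k ∈ Finset.range (m + 1),
            c i j k * (f₁ (a + i) (b + j) (N + k) - f₂ (a + i) (b + j) (N + k)) := by
          refine Finset.sum_congr rfl fun i hi => Finset.sum_congr rfl fun j hj => ?_
          exact (key i hi j hj).symm
      _ = 0 := e
  -- maximum argument
  set S := (Finset.range (Bx + 1)) ×ˢ (Finset.range (BY + 1)) with hS
  have hSne : S.Nonempty := ⟨(0, 0), by simp [hS]⟩
  obtain ⟨p₀, hp₀S, hp₀max⟩ := S.exists_max_image (fun p => ‖u p.1 p.2‖) hSne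
  set M := ‖u p₀.1 p₀.2‖ with hMdef
  have hMle : ∀ a b : ℕ, a ≤ Bx → b ≤ BY → ‖u a b‖ ≤ M := by
    intro a b ha hb
    exact hp₀max (a, b) (by simp [hS, Nat.lt_succ_iff, ha, hb])
  have hM0 : M = 0 := by
    by_contra hM0
    have hMpos : 0 < M := lt_of_le_of_ne (norm_nonneg _) (Ne.symm hM0)
    have hp₀ : p₀.1 ≤ Bx ∧ p₀.2 ≤ BY := by
      rw [hS, Finset.mem_product, Finset.mem_range, Finset.mem_range] at hp₀S
      omega
    obtain ⟨hx0, hy0⟩ := hp₀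
    have hband : xβ ≤ p₀.1 ∧ p₀.1 ≤ Bx - bx + xβ ∧ yβ ≤ p₀.2 ∧ p₀.2 ≤ BY - bY + yβ := by
      by_contra hnb
      have h0 := hout p₀.1 p₀.2 hx0 hy0 hnb
      exact hM0 (by rw [hMdef, h0]; simp)
    obtain ⟨h1, h2, h3, h4⟩ := hband
    have ha : p₀.1 - xβ ≤ Bx - bx := by omega
    have hb : p₀.2 - yβ ≤ BY - bY := by omega
    have heq0 := heqU (p₀.1 - xβ) (p₀.2 - yβ) ha hb
    rw [← Finset.sum_product'] at heq0
    have hmem : (xβ, yβ) ∈ (Finset.range (bx + 1)) ×ˢ (Finset.range (bY + 1)) := by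
      simp [Nat.lt_succ_iff, hxβ, hyβ]
    rw [← Finset.add_sum_erase _ _ hmem] at heq0
    have hxx : p₀.1 - xβ + xβ = p₀.1 := Nat.sub_add_cancel h1
    have hyy : p₀.2 - yβ + yβ = p₀.2 := Nat.sub_add_cancel h3
    rw [hxx, hyy] at heq0
    have hkey : c xβ yβ m * u p₀.1 p₀.2 =
        -∑ p ∈ ((Finset.range (bx + 1)) ×ˢ (Finset.range (bY + 1))).erase (xβ, yβ),
          c p.1 p.2 m * u (p₀.1 - xβ + p.1) (p₀.2 - yβ + p.2) :=
      eq_neg_of_add_eq_zero_left heq0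
    have habs : ‖c xβ yβ m‖ * M ≤
        ∑ p ∈ ((Finset.range (bx + 1)) ×ˢ (Finset.range (bY + 1))).erase (xβ, yβ),
          ‖c p.1 p.2 m‖ * M := by
      calc ‖c xβ yβ m‖ * M = ‖c xβ yβ m * u p₀.1 p₀.2‖ := by
            rw [norm_mul]
        _ = ‖∑ p ∈ ((Finset.range (bx + 1)) ×ˢ (Finset.range (bY + 1))).erase (xβ, yβ),
              c p.1 p.2 m * u (p₀.1 - xβ + p.1) (p₀.2 - yβ + p.2)‖ := by
            rw [hkey, norm_neg]
        _ ≤ ∑ p ∈ ((Finset.range (bx + 1)) ×ˢ (Finset.range (bY + 1))).erase (xβ, yβ),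
              ‖c p.1 p.2 m * u (p₀.1 - xβ + p.1) (p₀.2 - yβ + p.2)‖ :=
            norm_sum_le _ _
        _ ≤ ∑ p ∈ ((Finset.range (bx + 1)) ×ˢ (Finset.range (bY + 1))).erase (xβ, yβ),
              ‖c p.1 p.2 m‖ * M := by
            refine Finset.sum_le_sum fun p hp => ?_
            have hpT := Finset.mem_of_mem_erase hp
            rw [Finset.mem_product, Finset.mem_range, Finset.mem_range] at hpT
            rw [norm_mul]
            refine mul_le_mul_of_nonneg_left ?_ (norm_nonneg _)
            exact hMle _ _ (by omega) (by omega)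
    have hlt : ∑ p ∈ ((Finset.range (bx + 1)) ×ˢ (Finset.range (bY + 1))).erase (xβ, yβ),
        ‖c p.1 p.2 m‖ * M < ‖c xβ yβ m‖ * M := by
      rw [← Finset.sum_mul]
      exact mul_lt_mul_of_pos_right hdom hMpos
    linarith
  have := hMle x y hx hy
  rw [hM0] at this
  exact norm_eq_zero.mp (le_antisymm this (norm_nonneg _))
end
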